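/- For monotone submodular v with v(∅)=0 and maximal decision map X, every optimal price vector p of the monopolistic seller (maximizing u(p)=Σ_{j∈X(p)}p_j) satisfies v(X(p)) ≥ v(N)/H_n, where H_n is the n-th harmonic number. Moreover this bound is tight up to constants: for v(S) = 1+ε if |S|=1 and v(S)=H_{|S|} if |S|≥2 (with 0<ε<small), every optimal price vector yields |X(p)| ≤ 1 and welfare at most 1+ε while v(N)=H_n. -/

import Mathlib

noncomputable def Hh (k : ℕ) : ℝ := ∑ j ∈ Finset.Icc 1 k, (1 : ℝ) / j

lemma Hh_zero : Hh 0 = 0 := by simp [Hh]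

lemma Hh_succ (k : ℕ) : Hh (k + 1) = Hh k + 1 / (k + 1) := by
  rw [Hh, Hh, Finset.sum_Icc_succ_top (by omega : 1 ≤ k + 1)]
  push_cast; ring

lemma Hh_nonneg (k : ℕ) : 0 ≤ Hh k := by
  apply Finset.sum_nonneg; intro j _; positivity

lemma Hh_mono {a b : ℕ} (h : a ≤ b) : Hh a ≤ Hh b := by
  apply Finset.sum_le_sum_of_subset_of_nonneg (Finset.Icc_subset_Icc_right h)
  intro j _ _; positivity

/-- telescoping with submodularity -/
lemma tele {n : ℕ} (v : Finset (Fin n) → ℝ)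
    (hsub : ∀ S T : Finset (Fin n), v (S ∪ T) + v (S ∩ T) ≤ v S + v T) :
    ∀ (k : ℕ) (S T : Finset (Fin n)), T ⊆ S → (S \ T).card = k →
      v T + ∑ i ∈ S \ T, (v S - v (S.erase i)) ≤ v S := by
  intro k
  induction k with
  | zero =>
    intro S T hTS hc
    have : S \ T = ∅ := Finset.card_eq_zero.mp hc
    have hST : T = S := Finset.Subset.antisymm hTS (by
      intro x hx
      by_contra hxT
      have hmem : x ∈ S \ T := Finset.mem_sdiff.mpr ⟨hx, hxT⟩
      rw [this] at hmem
      exact absurd hmem (Finset.notMem_empty x))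
    subst hST
    simp
  | succ k ih =>
    intro S T hTS hc
    have hne : (S \ T).Nonempty := Finset.card_pos.mp (by omega)
    obtain ⟨i, hi⟩ := hne
    have hiS : i ∈ S := (Finset.mem_sdiff.mp hi).1
    have hiT : i ∉ T := (Finset.mem_sdiff.mp hi).2
    have hTS' : T ⊆ S.erase i := Finset.subset_erase.mpr ⟨hTS, hiT⟩
    have hT'S : insert i T ⊆ S := Finset.insert_subset hiS hTS
    have hsd : S \ insert i T = (S \ T).erase i := by
      rw [Finset.sdiff_insert]
    have hcard : (S \ insert i T).card = k := by
      rw [hsd, Finset.card_erase_of_mem hi, hc]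
      omega
    have hIH := ih S (insert i T) hT'S hcard
    have hunion : insert i T ∪ S.erase i = S := by
      rw [Finset.insert_union, Finset.union_eq_right.mpr hTS', Finset.insert_erase hiS]
    have hinter : insert i T ∩ S.erase i = T := by
      ext j
      simp only [Finset.mem_inter, Finset.mem_insert, Finset.mem_erase]
      constructor
      · rintro ⟨h1 | h1, hne', _⟩
        · exact absurd h1 hne'
        · exact h1
      · intro hj
        exact ⟨Or.inr hj, fun h => hiT (h ▸ hj), hTS hj⟩
    have hkey : v S + v T ≤ v (insert i T) + v (S.erase i) := by
      have := hsub (insert i T) (S.erase i)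
      rwa [hunion, hinter] at this
    have hsum : ∑ j ∈ S \ T, (v S - v (S.erase j))
        = (v S - v (S.erase i)) + ∑ j ∈ (S \ T).erase i, (v S - v (S.erase j)) :=
      (Finset.add_sum_erase _ _ hi).symm
    rw [hsum, ← hsd]
    linarith

/-- marginal prices for S force X q = S -/
lemma demand_eq {n : ℕ} (v : Finset (Fin n) → ℝ)
    (hmono : ∀ S T : Finset (Fin n), S ⊆ T → v S ≤ v T)
    (hsub : ∀ S T : Finset (Fin n), v (S ∪ T) + v (S ∩ T) ≤ v S + v T)
    (h0 : v ∅ = 0)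
    (X : (Fin n → ℝ) → Finset (Fin n))
    (hX : ∀ q : Fin n → ℝ, (∀ i, 0 ≤ q i) → ∀ T : Finset (Fin n),
      v T - ∑ i ∈ T, q i ≤ v (X q) - ∑ i ∈ X q, q i)
    (hXmax : ∀ q : Fin n → ℝ, (∀ i, 0 ≤ q i) → ∀ T : Finset (Fin n),
      (∀ U : Finset (Fin n), v U - ∑ i ∈ U, q i ≤ v T - ∑ i ∈ T, q i) →
      ¬ X q ⊂ T)
    (S : Finset (Fin n)) :
    X (fun i => if i ∈ S then v S - v (S.erase i) else v Finset.univ + 1) = S := by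
  set q : Fin n → ℝ := fun i => if i ∈ S then v S - v (S.erase i) else v Finset.univ + 1
    with hqdef
  have huniv0 : 0 ≤ v Finset.univ := h0 ▸ hmono ∅ Finset.univ (Finset.empty_subset _)
  have hq0 : ∀ i, 0 ≤ q i := by
    intro i
    simp only [hqdef]
    split
    · have := hmono (S.erase i) S (Finset.erase_subset i S); linarith
    · linarith
  -- utility of T ⊆ S is at most utility of S
  have hsubcase : ∀ T : Finset (Fin n), T ⊆ S →
      v T - ∑ i ∈ T, q i ≤ v S - ∑ i ∈ S, q i := by
    intro T hTS
    have htel := tele v hsub (S \ T).card S T hTS rfl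
    have hqS : ∀ T' : Finset (Fin n), T' ⊆ S →
        ∑ i ∈ T', q i = ∑ i ∈ T', (v S - v (S.erase i)) := by
      intro T' hT'
      apply Finset.sum_congr rfl
      intro i hi
      simp only [hqdef, if_pos (hT' hi)]
    have hsplit : ∑ i ∈ S \ T, (v S - v (S.erase i)) + ∑ i ∈ T, (v S - v (S.erase i))
        = ∑ i ∈ S, (v S - v (S.erase i)) := Finset.sum_sdiff hTS
    rw [hqS T hTS, hqS S (le_refl S)]
    linarith
  have hSmax : ∀ U : Finset (Fin n), v U - ∑ i ∈ U, q i ≤ v S - ∑ i ∈ S, q i := by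
    intro U
    by_cases hUS : U ⊆ S
    · exact hsubcase U hUS
    · obtain ⟨j, hjU, hjS⟩ := Finset.not_subset.mp hUS
      have hqj : q j = v Finset.univ + 1 := by simp only [hqdef, if_neg hjS]
      have hsum : q j ≤ ∑ i ∈ U, q i :=
        Finset.single_le_sum (fun i _ => hq0 i) hjU
      have hvU : v U ≤ v Finset.univ := hmono U Finset.univ (Finset.subset_univ U)
      have h1 : v U - ∑ i ∈ U, q i ≤ -1 := by rw [hqj] at hsum; linarith
      have h2 : (0:ℝ) ≤ v S - ∑ i ∈ S, q i := by
        have := hsubcase ∅ (Finset.empty_subset S)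
        simp [h0] at this
        linarith
      linarith
  have hXsub : X q ⊆ S := by
    by_contra hns
    obtain ⟨j, hjU, hjS⟩ := Finset.not_subset.mp hns
    have hqj : q j = v Finset.univ + 1 := by simp only [hqdef, if_neg hjS]
    have hsum : q j ≤ ∑ i ∈ X q, q i :=
      Finset.single_le_sum (fun i _ => hq0 i) hjU
    have hvU : v (X q) ≤ v Finset.univ := hmono _ Finset.univ (Finset.subset_univ _)
    have hge := hX q hq0 ∅
    simp [h0] at hge
    rw [hqj] at hsum
    linarith
  have hnotss := hXmax q hq0 S hSmax
  by_contra hne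
  exact hnotss (Finset.ssubset_iff_subset_ne.mpr ⟨hXsub, hne⟩)

/-- harmonic induction -/
lemma lemC {n : ℕ} (v : Finset (Fin n) → ℝ) (h0 : v ∅ = 0) (R : ℝ) (hR : 0 ≤ R)
    (key : ∀ S : Finset (Fin n), S.Nonempty →
      ∃ i ∈ S, v S ≤ v (S.erase i) + R / S.card) :
    ∀ S : Finset (Fin n), v S ≤ Hh S.card * R := by
  intro S
  induction S using Finset.strongInduction with
  | _ S ih =>
    rcases S.eq_empty_or_nonempty with rfl | hne
    · simp [h0, Hh_zero]
    · obtain ⟨i, hi, hle⟩ := key S hne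
      have h1 := ih (S.erase i) (Finset.erase_ssubset hi)
      have hcpos : 1 ≤ S.card := Finset.card_pos.mpr hne
      have hcard : S.card = (S.erase i).card + 1 := by
        rw [Finset.card_erase_of_mem hi]; omega
      have hdiv : R / S.card = 1 / ((S.erase i).card + 1 : ℝ) * R := by
        rw [hcard]; push_cast; ring
      calc v S ≤ v (S.erase i) + R / S.card := hle
        _ ≤ Hh (S.erase i).card * R + R / S.card := by linarith
        _ = Hh S.card * R := by rw [hcard, Hh_succ]; push_cast; field_simp

theorem stmt19' {n : ℕ} (hn : 1 ≤ n) :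
    (∀ v : Finset (Fin n) → ℝ,
      (∀ S T : Finset (Fin n), S ⊆ T → v S ≤ v T) →
      (∀ S T : Finset (Fin n), v (S ∪ T) + v (S ∩ T) ≤ v S + v T) →
      v ∅ = 0 →
      ∀ X : (Fin n → ℝ) → Finset (Fin n),
        (∀ q : Fin n → ℝ, (∀ i, 0 ≤ q i) → ∀ T : Finset (Fin n),
          v T - ∑ i ∈ T, q i ≤ v (X q) - ∑ i ∈ X q, q i) →
        (∀ q : Fin n → ℝ, (∀ i, 0 ≤ q i) → ∀ T : Finset (Fin n),
          (∀ U : Finset (Fin n), v U - ∑ i ∈ U, q i ≤ v T - ∑ i ∈ T, q i) →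
          ¬ X q ⊂ T) →
      ∀ p : Fin n → ℝ, (∀ i, 0 ≤ p i) →
        (∀ q : Fin n → ℝ, (∀ i, 0 ≤ q i) → ∑ j ∈ X q, q j ≤ ∑ j ∈ X p, p j) →
        v Finset.univ ≤ (∑ j ∈ Finset.Icc 1 n, (1 : ℝ) / j) * v (X p)) := by
  intro v hmono hsub h0 X hX hXmax p hp0 hopt
  set R : ℝ := ∑ j ∈ X p, p j with hRdef
  have hR0 : 0 ≤ R := Finset.sum_nonneg (fun i _ => hp0 i)
  -- revenue bound from any S via marginal prices
  have hgS : ∀ S : Finset (Fin n), ∑ i ∈ S, (v S - v (S.erase i)) ≤ R := by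
    intro S
    set q : Fin n → ℝ := fun i => if i ∈ S then v S - v (S.erase i) else v Finset.univ + 1
      with hqdef
    have huniv0 : 0 ≤ v Finset.univ := h0 ▸ hmono ∅ Finset.univ (Finset.empty_subset _)
    have hq0 : ∀ i, 0 ≤ q i := by
      intro i
      simp only [hqdef]
      split
      · have := hmono (S.erase i) S (Finset.erase_subset i S); linarith
      · linarith
    have hXq : X q = S := demand_eq v hmono hsub h0 X hX hXmax S
    have := hopt q hq0
    rw [hXq] at this
    calc ∑ i ∈ S, (v S - v (S.erase i)) = ∑ i ∈ S, q i := by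
          apply Finset.sum_congr rfl
          intro i hi
          simp only [hqdef, if_pos hi]
      _ ≤ R := this
  -- v(X p) ≥ R
  have hvXp : R ≤ v (X p) := by
    have := hX p hp0 ∅
    simp [h0] at this
    linarith
  -- harmonic bound
  have hkey : ∀ S : Finset (Fin n), S.Nonempty →
      ∃ i ∈ S, v S ≤ v (S.erase i) + R / S.card := by
    intro S hne
    have hcpos : (0:ℝ) < S.card := by
      have := Finset.card_pos.mpr hne; exact_mod_cast this
    have hsum : ∑ i ∈ S, (v S - v (S.erase i)) ≤ ∑ _i ∈ S, R / S.card := by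
      rw [Finset.sum_const, nsmul_eq_mul]
      rw [mul_div_cancel₀ R (ne_of_gt hcpos)] at *
      · exact hgS S
    obtain ⟨i, hi, hle⟩ := Finset.exists_le_of_sum_le hne hsum
    exact ⟨i, hi, by linarith⟩
  have hH := lemC v h0 R hR0 hkey Finset.univ
  have hcard : (Finset.univ : Finset (Fin n)).card = n := by
    simp
  rw [hcard] at hH
  have hHn : (0:ℝ) ≤ Hh n := Hh_nonneg n
  calc v Finset.univ ≤ Hh n * R := hH
    _ ≤ Hh n * v (X p) := by apply mul_le_mul_of_nonneg_left hvXp hHn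
    _ = (∑ j ∈ Finset.Icc 1 n, (1 : ℝ) / j) * v (X p) := rfl

theorem stmt19b {n : ℕ} (hn : 1 ≤ n) :
    (∀ ε : ℝ, 0 < ε → ε < 1/6 → 2 ≤ n →
      ∀ v : Finset (Fin n) → ℝ,
      (∀ S : Finset (Fin n),
        v S = if S.card = 1 then 1 + ε
          else ∑ j ∈ Finset.Icc 1 S.card, (1 : ℝ) / j) →
      ∀ X : (Fin n → ℝ) → Finset (Fin n),
        (∀ q : Fin n → ℝ, (∀ i, 0 ≤ q i) → ∀ T : Finset (Fin n),
          v T - ∑ i ∈ T, q i ≤ v (X q) - ∑ i ∈ X q, q i) →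
        (∀ q : Fin n → ℝ, (∀ i, 0 ≤ q i) → ∀ T : Finset (Fin n),
          (∀ U : Finset (Fin n), v U - ∑ i ∈ U, q i ≤ v T - ∑ i ∈ T, q i) →
          ¬ X q ⊂ T) →
      ∀ p : Fin n → ℝ, (∀ i, 0 ≤ p i) →
        (∀ q : Fin n → ℝ, (∀ i, 0 ≤ q i) → ∑ j ∈ X q, q j ≤ ∑ j ∈ X p, p j) →
        (X p).card ≤ 1 ∧ v (X p) ≤ 1 + ε ∧
          v Finset.univ = ∑ j ∈ Finset.Icc 1 n, (1 : ℝ) / j) := by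
  intro ε hε0 hε6 hn2 v hv X hX hXmax p hp0 hopt
  have hv' : ∀ S : Finset (Fin n), v S = if S.card = 1 then 1 + ε else Hh S.card := by
    intro S; rw [hv S]; rfl
  have hHn2 : Hh 2 = 3/2 := by
    have h2 : Hh 2 = Hh 1 + 1/2 := by
      have := Hh_succ 1; norm_num at this ⊢; linarith
    have h1 : Hh 1 = 1 := by
      have := Hh_succ 0; rw [Hh_zero] at this; norm_num at this ⊢; linarith
    rw [h2, h1]; norm_num
  have hHnge : 3/2 ≤ Hh n := hHn2 ▸ Hh_mono hn2
  have hv0 : v ∅ = 0 := by rw [hv' ∅]; simp [Hh_zero]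
  -- all values are at most Hh n
  have hvle : ∀ T : Finset (Fin n), v T ≤ Hh n := by
    intro T
    have hcle : T.card ≤ n := by
      have := Finset.card_le_card (Finset.subset_univ T)
      simpa using this
    rw [hv' T]
    split
    · linarith
    · exact Hh_mono hcle
  set R : ℝ := ∑ j ∈ X p, p j with hRdef
  -- R ≤ v (X p)
  have hvXp : R ≤ v (X p) := by
    have := hX p hp0 ∅
    simp [hv0] at this
    linarith
  -- R ≥ 1 + ε via singleton pricing
  have hRge : 1 + ε ≤ R := by
    set i₀ : Fin n := ⟨0, by omega⟩ with hi₀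
    set q : Fin n → ℝ := fun i => if i = i₀ then 1 + ε else Hh n + 2 with hqdef
    have hq0 : ∀ i, 0 ≤ q i := by
      intro i
      simp only [hqdef]
      split
      · linarith
      · have := Hh_nonneg n; linarith
    have hvs : v {i₀} = 1 + ε := by rw [hv' {i₀}]; simp
    have hqs : ∑ i ∈ ({i₀} : Finset (Fin n)), q i = 1 + ε := by
      rw [Finset.sum_singleton]; simp [hqdef]
    have hbig : ∀ U : Finset (Fin n), ¬ U ⊆ {i₀} → v U - ∑ i ∈ U, q i ≤ -2 := by
      intro U hUs
      obtain ⟨j, hjU, hjs⟩ := Finset.not_subset.mp hUs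
      have hjne : j ≠ i₀ := by simpa using hjs
      have hqj : q j = Hh n + 2 := by simp only [hqdef, if_neg hjne]
      have hsum : q j ≤ ∑ i ∈ U, q i := Finset.single_le_sum (fun i _ => hq0 i) hjU
      have := hvle U
      rw [hqj] at hsum
      linarith
    have hmax : ∀ U : Finset (Fin n), v U - ∑ i ∈ U, q i ≤ v {i₀} - ∑ i ∈ {i₀}, q i := by
      intro U
      rw [hvs, hqs]
      by_cases hUs : U ⊆ {i₀}
      · rcases Finset.subset_singleton_iff.mp hUs with rfl | rfl
        · simp [hv0]
        · rw [hvs, hqs]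
      · have := hbig U hUs; linarith
    have hXsub : X q ⊆ {i₀} := by
      by_contra hns
      have h1 := hbig (X q) hns
      have h2 := hX q hq0 ∅
      simp [hv0] at h2
      linarith
    have hXeq : X q = {i₀} := by
      have hnss := hXmax q hq0 {i₀} hmax
      by_contra hne
      exact hnss (Finset.ssubset_iff_subset_ne.mpr ⟨hXsub, hne⟩)
    have := hopt q hq0
    rw [hXeq, hqs] at this
    exact this
  -- price bound: p i ≤ marginal, so R ≤ sum of marginals of X p
  have hgbound : R ≤ ∑ i ∈ X p, (v (X p) - v ((X p).erase i)) := by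
    have hterm : ∀ i ∈ X p, p i ≤ v (X p) - v ((X p).erase i) := by
      intro i hi
      have h1 := hX p hp0 ((X p).erase i)
      have h2 : ∑ j ∈ X p, p j = p i + ∑ j ∈ (X p).erase i, p j :=
        (Finset.add_sum_erase _ _ hi).symm
      rw [← hRdef] at h1
      linarith [h1, h2]
    calc R = ∑ i ∈ X p, p i := hRdef
      _ ≤ ∑ i ∈ X p, (v (X p) - v ((X p).erase i)) := Finset.sum_le_sum hterm
  -- card ≤ 1
  have hcard1 : (X p).card ≤ 1 := by
    by_contra hc
    push_neg at hc
    have hc2 : 2 ≤ (X p).card := hc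
    have hvXpval : v (X p) = Hh (X p).card := by
      rw [hv' (X p)]
      rw [if_neg (by omega)]
    have herase : ∀ i ∈ X p, ((X p).erase i).card = (X p).card - 1 := fun i hi =>
      Finset.card_erase_of_mem hi
    rcases eq_or_lt_of_le hc2 with h2 | h3
    · -- card = 2
      have hsum : ∑ i ∈ X p, (v (X p) - v ((X p).erase i)) = 1 - 2*ε := by
        have hterm : ∀ i ∈ X p, v (X p) - v ((X p).erase i) = 1/2 - ε := by
          intro i hi
          have hce : ((X p).erase i).card = 1 := by rw [herase i hi, ← h2]
          have : v ((X p).erase i) = 1 + ε := by rw [hv' _, if_pos hce]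
          rw [hvXpval, ← h2, hHn2, this]; ring
        rw [Finset.sum_congr rfl hterm, Finset.sum_const, ← h2]
        push_cast; ring
      rw [hsum] at hgbound
      linarith
    · -- card ≥ 3
      have hk : (X p).card = ((X p).card - 1) + 1 := by omega
      have hsum : ∑ i ∈ X p, (v (X p) - v ((X p).erase i)) = 1 := by
        have hterm : ∀ i ∈ X p, v (X p) - v ((X p).erase i) = 1 / (X p).card := by
          intro i hi
          have hce : ((X p).erase i).card = (X p).card - 1 := herase i hi
          have hcene : ((X p).card - 1) ≠ 1 := by omega
          have hve : v ((X p).erase i) = Hh ((X p).card - 1) := by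
            rw [hv' _, hce, if_neg hcene]
          have hstep : Hh (X p).card = Hh ((X p).card - 1) + 1 / (((X p).card - 1 : ℕ) + 1 : ℝ) := by
            conv_lhs => rw [hk]
            rw [Hh_succ]
          have hcast : (((X p).card - 1 : ℕ) + 1 : ℝ) = ((X p).card : ℝ) := by
            have : ((X p).card - 1 : ℕ) + 1 = (X p).card := by omega
            exact_mod_cast congrArg (Nat.cast : ℕ → ℝ) this
          rw [hvXpval, hve, hstep, hcast]
          ring
        rw [Finset.sum_congr rfl hterm, Finset.sum_const, nsmul_eq_mul]
        have hcpos : (0:ℝ) < ((X p).card : ℝ) := by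
          have : 0 < (X p).card := by omega
          exact_mod_cast this
        rw [mul_one_div, div_self (ne_of_gt hcpos)]
      rw [hsum] at hgbound
      linarith
  refine ⟨hcard1, ?_, ?_⟩
  · -- v (X p) ≤ 1 + ε
    rw [hv' (X p)]
    rcases Nat.lt_or_ge (X p).card 1 with h | h
    · have h0' : (X p).card = 0 := by omega
      rw [if_neg (by omega), h0', Hh_zero]
      linarith
    · have h1' : (X p).card = 1 := by omega
      rw [if_pos h1']
  · rw [hv' Finset.univ]
    have : (Finset.univ : Finset (Fin n)).card = n := by simp
    rw [this, if_neg (by omega)]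
    rfl




/-- (a) For monotone submodular `v` with `v ∅ = 0` and a maximal
decision map `X`, every revenue-optimal price vector `p` of the monopolistic
seller satisfies `v (X p) ≥ v(N)/H_n`.
(b) Tightness: for `v S = 1 + ε` if `|S| = 1` and `v S = H_{|S|}` otherwise
(`0 < ε < 1/6`, `n ≥ 2`), every optimal price vector yields `|X p| ≤ 1` and
welfare at most `1 + ε`, while `v(N) = H_n`. -/
theorem stmt19 {n : ℕ} (hn : 1 ≤ n) :
    (∀ v : Finset (Fin n) → ℝ,
      (∀ S T : Finset (Fin n), S ⊆ T → v S ≤ v T) →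
      (∀ S T : Finset (Fin n), v (S ∪ T) + v (S ∩ T) ≤ v S + v T) →
      v ∅ = 0 →
      ∀ X : (Fin n → ℝ) → Finset (Fin n),
        (∀ q : Fin n → ℝ, (∀ i, 0 ≤ q i) → ∀ T : Finset (Fin n),
          v T - ∑ i ∈ T, q i ≤ v (X q) - ∑ i ∈ X q, q i) →
        (∀ q : Fin n → ℝ, (∀ i, 0 ≤ q i) → ∀ T : Finset (Fin n),
          (∀ U : Finset (Fin n), v U - ∑ i ∈ U, q i ≤ v T - ∑ i ∈ T, q i) →
          ¬ X q ⊂ T) →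
      ∀ p : Fin n → ℝ, (∀ i, 0 ≤ p i) →
        (∀ q : Fin n → ℝ, (∀ i, 0 ≤ q i) → ∑ j ∈ X q, q j ≤ ∑ j ∈ X p, p j) →
        v Finset.univ ≤ (∑ j ∈ Finset.Icc 1 n, (1 : ℝ) / j) * v (X p)) ∧
    (∀ ε : ℝ, 0 < ε → ε < 1/6 → 2 ≤ n →
      ∀ v : Finset (Fin n) → ℝ,
      (∀ S : Finset (Fin n),
        v S = if S.card = 1 then 1 + ε
          else ∑ j ∈ Finset.Icc 1 S.card, (1 : ℝ) / j) →
      ∀ X : (Fin n → ℝ) → Finset (Fin n),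
        (∀ q : Fin n → ℝ, (∀ i, 0 ≤ q i) → ∀ T : Finset (Fin n),
          v T - ∑ i ∈ T, q i ≤ v (X q) - ∑ i ∈ X q, q i) →
        (∀ q : Fin n → ℝ, (∀ i, 0 ≤ q i) → ∀ T : Finset (Fin n),
          (∀ U : Finset (Fin n), v U - ∑ i ∈ U, q i ≤ v T - ∑ i ∈ T, q i) →
          ¬ X q ⊂ T) →
      ∀ p : Fin n → ℝ, (∀ i, 0 ≤ p i) →
        (∀ q : Fin n → ℝ, (∀ i, 0 ≤ q i) → ∑ j ∈ X q, q j ≤ ∑ j ∈ X p, p j) →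
        (X p).card ≤ 1 ∧ v (X p) ≤ 1 + ε ∧
          v Finset.univ = ∑ j ∈ Finset.Icc 1 n, (1 : ℝ) / j) := by
  exact ⟨stmt19' hn, stmt19b hn⟩
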